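/- arXiv:0902.1080 — 11 statements merged into one kernel-verified Lean document; each statement's English description precedes it below -/
import Mathlib

section
/- For any set A of attributes, each A-equivalence class of formal concepts of a database Db has a least element with respect to the order ⪯, where (X,Y) ⪯ (X',Y') iff X ⊆ X' and Y' ⊆ Y. -/
variable {α β : Type*} [DecidableEq α] [DecidableEq β]

/-- `(X, Y)` is a 1-rectangle of the database with relation `Db`,
attribute set `AA` and object set `OO`: every attribute of `X` is in
relation with every object of `Y`. -/
def IsRect (Db : α → β → Prop) (AA : Finset α) (OO : Finset β)
    (X : Finset α) (Y : Finset β) : Prop :=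
  X ⊆ AA ∧ Y ⊆ OO ∧ ∀ a ∈ X, ∀ o ∈ Y, Db a o

/-- A formal concept is a 1-rectangle that is maximal for componentwise
inclusion of bi-sets. -/
def IsConcept (Db : α → β → Prop) (AA : Finset α) (OO : Finset β)
    (X : Finset α) (Y : Finset β) : Prop :=
  IsRect Db AA OO X Y ∧
    ∀ X' Y', IsRect Db AA OO X' Y' → X ⊆ X' → Y ⊆ Y' → X = X' ∧ Y = Y'

/-- Every `A`-equivalence class of formal concepts has a least element for
the order `(X,Y) ⪯ (X',Y') ↔ X ⊆ X' ∧ Y' ⊆ Y`. -/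
theorem A_equiv_class_has_least (Db : α → β → Prop) (AA : Finset α) (OO : Finset β)
    (A : Finset α) (X : Finset α) (Y : Finset β)
    (h : IsConcept Db AA OO X Y) :
    ∃ X₀ Y₀, IsConcept Db AA OO X₀ Y₀ ∧ X₀ ∩ A = X ∩ A ∧
      ∀ X' Y', IsConcept Db AA OO X' Y' → X' ∩ A = X ∩ A → X₀ ⊆ X' ∧ Y' ⊆ Y₀ := by
  classical
  set Y₀ : Finset β := OO.filter (fun o => ∀ a ∈ X ∩ A, Db a o) with hY₀
  set X₀ : Finset α := AA.filter (fun a => ∀ o ∈ Y₀, Db a o) with hX₀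
  have hXA₀ : X ∩ A ⊆ X₀ := by
    intro a ha
    refine Finset.mem_filter.2 ⟨h.1.1 (Finset.mem_inter.1 ha).1, fun o ho => ?_⟩
    exact (Finset.mem_filter.1 ho).2 a ha
  have hrect : IsRect Db AA OO X₀ Y₀ :=
    ⟨Finset.filter_subset _ _, Finset.filter_subset _ _,
      fun a ha o ho => (Finset.mem_filter.1 ha).2 o ho⟩
  have hconcept : IsConcept Db AA OO X₀ Y₀ := by
    refine ⟨hrect, fun X' Y' hr hX hY => ?_⟩
    have hY' : Y' ⊆ Y₀ := by
      intro o ho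
      refine Finset.mem_filter.2 ⟨hr.2.1 ho, fun a ha => ?_⟩
      exact hr.2.2 a (hX (hXA₀ ha)) o ho
    have hX' : X' ⊆ X₀ := by
      intro a ha
      refine Finset.mem_filter.2 ⟨hr.1 ha, fun o ho => ?_⟩
      exact hr.2.2 a ha o (hY ho)
    exact ⟨Finset.Subset.antisymm hX hX', Finset.Subset.antisymm hY hY'⟩
  have hleast : ∀ X' Y', IsConcept Db AA OO X' Y' → X' ∩ A = X ∩ A →
      X₀ ⊆ X' ∧ Y' ⊆ Y₀ := by
    intro X' Y' hc he
    have hY' : Y' ⊆ Y₀ := by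
      intro o ho
      refine Finset.mem_filter.2 ⟨hc.1.2.1 ho, fun a ha => ?_⟩
      exact hc.1.2.2 a (Finset.mem_inter.1 (he ▸ ha)).1 o ho
    refine ⟨?_, hY'⟩
    intro a ha
    have haAA : a ∈ AA := (Finset.mem_filter.1 ha).1
    have hrel : ∀ o ∈ Y', Db a o := fun o ho =>
      (Finset.mem_filter.1 ha).2 o (hY' ho)
    have hr : IsRect Db AA OO (insert a X') Y' := by
      refine ⟨Finset.insert_subset haAA hc.1.1, hc.1.2.1, fun b hb o ho => ?_⟩
      rcases Finset.mem_insert.1 hb with rfl | hb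
      · exact hrel o ho
      · exact hc.1.2.2 b hb o ho
    have := hc.2 (insert a X') Y' hr (Finset.subset_insert _ _) Finset.Subset.rfl
    exact this.1 ▸ Finset.mem_insert_self a X'
  have hXX : X₀ ⊆ X := (hleast X Y h rfl).1
  exact ⟨X₀, Y₀, hconcept,
    Finset.Subset.antisymm (Finset.inter_subset_inter_right hXX)
      (Finset.subset_inter (fun a ha => hXA₀ ha) Finset.inter_subset_right), hleast⟩
end

section
/- Let Db be a database and A a set of attributes, and let π_A(Db) be the database obtained by restricting Db to the attributes in A. If (X, Y) is a formal concept of π_A(Db), then there exists a set of attributes X' with X' ∩ A = X such that (X', Y) is a formal concept of Db. -/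
variable {α β : Type*} [DecidableEq α] [DecidableEq β]

/-- A concept `(X,Y)` of the projected database `π_A(Db)` (same relation,
attribute set restricted to `A`) extends to a concept `(X',Y)` of `Db`
with `X' ∩ A = X`. -/
theorem concept_extension (Db : α → β → Prop) (AA : Finset α) (OO : Finset β)
    (A : Finset α) (hA : A ⊆ AA) (X : Finset α) (Y : Finset β)
    (h : IsConcept Db A OO X Y) :
    ∃ X' : Finset α, X' ∩ A = X ∧ IsConcept Db AA OO X' Y := by
  classical
  obtain ⟨⟨hXA, hYO, hXY⟩, hmax⟩ := h
  refine ⟨AA.filter (fun a => ∀ o ∈ Y, Db a o), ?_, ?_, ?_⟩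
  · ext a
    simp only [Finset.mem_inter, Finset.mem_filter]
    constructor
    · rintro ⟨⟨-, hall⟩, haA⟩
      have hrect : IsRect Db A OO (insert a X) Y := by
        refine ⟨?_, hYO, ?_⟩
        · intro x hx
          rcases Finset.mem_insert.mp hx with rfl | hx
          · exact haA
          · exact hXA hx
        · intro x hx o ho
          rcases Finset.mem_insert.mp hx with rfl | hx
          · exact hall o ho
          · exact hXY x hx o ho
      have := (hmax _ _ hrect (Finset.subset_insert a X) subset_rfl).1
      rw [this]; exact Finset.mem_insert_self a X
    · intro haX
      exact ⟨⟨hA (hXA haX), fun o ho => hXY a haX o ho⟩, hXA haX⟩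
  · exact ⟨Finset.filter_subset _ _, hYO, fun a ha o ho =>
      (Finset.mem_filter.mp ha).2 o ho⟩
  · rintro X'' Y' ⟨hX''A, hY'O, hr⟩ hsub hYsub
    have hX'' : X'' = AA.filter (fun a => ∀ o ∈ Y, Db a o) := by
      apply Finset.Subset.antisymm _ hsub
      intro a ha
      exact Finset.mem_filter.mpr ⟨hX''A ha, fun o ho => hr a ha o (hYsub ho)⟩
    have hXsub : X ⊆ X'' := by
      intro x hx
      apply hsub
      exact Finset.mem_filter.mpr ⟨hA (hXA hx), fun o ho => hXY x hx o ho⟩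
    have hrect : IsRect Db A OO X Y' :=
      ⟨hXA, hY'O, fun a ha o ho => hr a (hXsub ha) o ho⟩
    have := (hmax X Y' hrect subset_rfl hYsub).2
    exact ⟨hX''.symm, this⟩
end

section
/- Let Db be a database, A a set of attributes, and LE_A the set of least elements (for the order ⪯) of the A-equivalence classes of the formal concepts of Db. Then the set of formal concepts of the projected database π_A(Db) equals { (X ∩ A, Y) : (X,Y) ∈ LE_A }. -/
variable {α β : Type*} [DecidableEq α] [DecidableEq β]

open Classical in
noncomputable def att (Db : α → β → Prop) (AA : Finset α) (Y : Finset β) : Finset α :=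
  AA.filter (fun a => ∀ o ∈ Y, Db a o)

open Classical in
noncomputable def obj (Db : α → β → Prop) (OO : Finset β) (X : Finset α) : Finset β :=
  OO.filter (fun o => ∀ a ∈ X, Db a o)

lemma mem_att {Db : α → β → Prop} {AA : Finset α} {Y : Finset β} {a : α} :
    a ∈ att Db AA Y ↔ a ∈ AA ∧ ∀ o ∈ Y, Db a o := by
  classical simp [att]

lemma mem_obj {Db : α → β → Prop} {OO : Finset β} {X : Finset α} {o : β} :
    o ∈ obj Db OO X ↔ o ∈ OO ∧ ∀ a ∈ X, Db a o := by
  classical simp [obj]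

lemma att_anti {Db : α → β → Prop} {AA : Finset α} {Y Y' : Finset β} (h : Y ⊆ Y') :
    att Db AA Y' ⊆ att Db AA Y := fun a ha => by
  rw [mem_att] at ha ⊢; exact ⟨ha.1, fun o ho => ha.2 o (h ho)⟩

lemma obj_anti {Db : α → β → Prop} {OO : Finset β} {X X' : Finset α} (h : X ⊆ X') :
    obj Db OO X' ⊆ obj Db OO X := fun o ho => by
  rw [mem_obj] at ho ⊢; exact ⟨ho.1, fun a ha => ho.2 a (h ha)⟩

lemma subset_obj_att {Db : α → β → Prop} {AA : Finset α} {OO : Finset β} {Y : Finset β}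
    (hY : Y ⊆ OO) : Y ⊆ obj Db OO (att Db AA Y) := fun o ho => by
  rw [mem_obj]; exact ⟨hY ho, fun a ha => (mem_att.mp ha).2 o ho⟩

lemma subset_att_obj {Db : α → β → Prop} {AA : Finset α} {OO : Finset β} {X : Finset α}
    (hX : X ⊆ AA) : X ⊆ att Db AA (obj Db OO X) := fun a ha => by
  rw [mem_att]; exact ⟨hX ha, fun o ho => (mem_obj.mp ho).2 a ha⟩

lemma att_subset {Db : α → β → Prop} {AA : Finset α} {Y : Finset β} :
    att Db AA Y ⊆ AA := fun a ha => (mem_att.mp ha).1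

lemma obj_subset {Db : α → β → Prop} {OO : Finset β} {X : Finset α} :
    obj Db OO X ⊆ OO := fun o ho => (mem_obj.mp ho).1

lemma rect_subset_att {Db : α → β → Prop} {AA : Finset α} {OO : Finset β}
    {X : Finset α} {Y : Finset β} (h : IsRect Db AA OO X Y) : X ⊆ att Db AA Y :=
  fun a ha => mem_att.mpr ⟨h.1 ha, fun o ho => h.2.2 a ha o ho⟩

lemma rect_subset_obj {Db : α → β → Prop} {AA : Finset α} {OO : Finset β}
    {X : Finset α} {Y : Finset β} (h : IsRect Db AA OO X Y) : Y ⊆ obj Db OO X :=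
  fun o ho => mem_obj.mpr ⟨h.2.1 ho, fun a ha => h.2.2 a ha o ho⟩

lemma concept_of {Db : α → β → Prop} {AA : Finset α} {OO : Finset β}
    {X : Finset α} {Y : Finset β} (h1 : X = att Db AA Y) (h2 : Y = obj Db OO X) :
    IsConcept Db AA OO X Y := by
  have hrect : IsRect Db AA OO X Y := by
    refine ⟨fun a ha => (mem_att.mp (h1 ▸ ha)).1, fun o ho => (mem_obj.mp (h2 ▸ ho)).1,
      fun a ha o ho => (mem_att.mp (h1 ▸ ha)).2 o ho⟩
  refine ⟨hrect, fun X' Y' hr hX hY => ?_⟩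
  have hX' : X' ⊆ X := h1 ▸ (rect_subset_att hr).trans (att_anti hY)
  have hXeq : X = X' := subset_antisymm hX hX'
  have hY' : Y' ⊆ Y := h2 ▸ (rect_subset_obj hr).trans (obj_anti hX)
  exact ⟨hXeq, subset_antisymm hY hY'⟩

lemma concept_eq {Db : α → β → Prop} {AA : Finset α} {OO : Finset β}
    {X : Finset α} {Y : Finset β} (h : IsConcept Db AA OO X Y) :
    X = att Db AA Y ∧ Y = obj Db OO X := by
  obtain ⟨hr, hmax⟩ := h
  have h1 : IsRect Db AA OO (att Db AA Y) Y :=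
    ⟨att_subset, hr.2.1, fun a ha o ho => (mem_att.mp ha).2 o ho⟩
  have h2 : IsRect Db AA OO X (obj Db OO X) :=
    ⟨hr.1, obj_subset, fun a ha o ho => (mem_obj.mp ho).2 a ha⟩
  exact ⟨(hmax _ _ h1 (rect_subset_att hr) subset_rfl).1,
    (hmax _ _ h2 subset_rfl (rect_subset_obj hr)).2⟩

lemma att_inter {Db : α → β → Prop} {AA A : Finset α} {Y : Finset β} (hA : A ⊆ AA) :
    att Db AA Y ∩ A = att Db A Y := by
  ext a
  simp only [Finset.mem_inter, mem_att]
  exact ⟨fun ⟨⟨_, h⟩, ha⟩ => ⟨ha, h⟩, fun ⟨ha, h⟩ => ⟨⟨hA ha, h⟩, ha⟩⟩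

/-- The concepts of the projected database are exactly the projections of the
least elements of the `A`-equivalence classes of the concepts of `Db`. -/
theorem projection_theorem (Db : α → β → Prop) (AA : Finset α) (OO : Finset β)
    (A : Finset α) (hA : A ⊆ AA) :
    {C : Finset α × Finset β | IsConcept Db A OO C.1 C.2} =
      (fun C : Finset α × Finset β => (C.1 ∩ A, C.2)) ''
        {C : Finset α × Finset β | IsConcept Db AA OO C.1 C.2 ∧
          ∀ X' Y', IsConcept Db AA OO X' Y' → X' ∩ A = C.1 ∩ A →
            C.1 ⊆ X' ∧ Y' ⊆ C.2} := by
  ext ⟨X, Y⟩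
  simp only [Set.mem_setOf_eq, Set.mem_image, Prod.mk.injEq, Prod.exists]
  constructor
  · intro h
    obtain ⟨h1, h2⟩ := concept_eq h
    set Xh := att Db AA Y with hXh
    have hcap : Xh ∩ A = X := by rw [hXh, att_inter hA, ← h1]
    have hYobj : Y = obj Db OO Xh := by
      apply subset_antisymm (subset_obj_att h.1.2.1)
      calc obj Db OO Xh ⊆ obj Db OO (Xh ∩ A) := obj_anti (Finset.inter_subset_left)
        _ = Y := by rw [hcap, ← h2]
    have hconc : IsConcept Db AA OO Xh Y := concept_of rfl hYobj
    refine ⟨Xh, Y, ⟨hconc, fun X' Y' hc' heq' => ?_⟩, hcap, rfl⟩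
    obtain ⟨h1', h2'⟩ := concept_eq hc'
    have hY' : Y' ⊆ Y := by
      calc Y' = obj Db OO X' := h2'
        _ ⊆ obj Db OO (X' ∩ A) := obj_anti Finset.inter_subset_left
        _ = Y := by rw [heq', hcap, ← h2]
    refine ⟨?_, hY'⟩
    show att Db AA Y ⊆ X'
    rw [h1']
    exact att_anti hY'

  · rintro ⟨Xh, Yh, ⟨hc, hleast⟩, hcap, rfl⟩
    obtain ⟨h1, h2⟩ := concept_eq hc
    subst hcap
    have hXA : Xh ∩ A = att Db A Yh := by rw [h1, att_inter hA]
    refine concept_of hXA ?_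
    apply subset_antisymm
    · exact h2 ▸ obj_anti Finset.inter_subset_left
    · -- obj (Xh ∩ A) ⊆ Yh
      set Z := obj Db OO (Xh ∩ A) with hZ
      set X'' := att Db AA Z with hX''
      have hY'' : Z ⊆ obj Db OO X'' := subset_obj_att obj_subset
      have hYZ : Yh ⊆ Z := h2 ▸ obj_anti Finset.inter_subset_left
      have hX''sub : X'' ⊆ Xh := h1 ▸ att_anti hYZ
      have hX''sup : Xh ∩ A ⊆ X'' :=
        subset_att_obj (Finset.inter_subset_left.trans (h1 ▸ att_subset))
      have hX''att : X'' = att Db AA (obj Db OO X'') :=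
        subset_antisymm (subset_att_obj att_subset) (att_anti hY'')
      have hconc'' : IsConcept Db AA OO X'' (obj Db OO X'') := concept_of hX''att rfl
      have hcapeq : X'' ∩ A = Xh ∩ A :=
        subset_antisymm (Finset.inter_subset_inter_right hX''sub)
          (Finset.subset_inter hX''sup Finset.inter_subset_right)
      obtain ⟨_, hle2⟩ := hleast X'' (obj Db OO X'') hconc'' hcapeq
      exact hY''.trans hle2
end

section
/- Every formal concept of the projected database π_A(Db) arises as (X ∩ A, Y) for some concept (X,Y) of Db that is the least element of its A-equivalence class (the ⊆ direction of the projection theorem). -/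
variable {α β : Type*} [DecidableEq α] [DecidableEq β]

/-- Every concept of the projected database arises as `(X ∩ A, Y)` for some
concept `(X,Y)` of `Db` that is the least element of its `A`-equivalence
class. -/
theorem projection_subset (Db : α → β → Prop) (AA : Finset α) (OO : Finset β)
    (A : Finset α) (hA : A ⊆ AA) (X₀ : Finset α) (Y₀ : Finset β)
    (h : IsConcept Db A OO X₀ Y₀) :
    ∃ X Y, IsConcept Db AA OO X Y ∧
      (∀ X' Y', IsConcept Db AA OO X' Y' → X' ∩ A = X ∩ A → X ⊆ X' ∧ Y' ⊆ Y) ∧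
      X₀ = X ∩ A ∧ Y₀ = Y := by
  classical
  obtain ⟨⟨hX₀A, hY₀O, hrel⟩, hmax⟩ := h
  set X : Finset α := AA.filter (fun a => ∀ o ∈ Y₀, Db a o) with hXdef
  have hXA : X ⊆ AA := Finset.filter_subset _ _
  have hXrel : ∀ a ∈ X, ∀ o ∈ Y₀, Db a o := fun a ha => (Finset.mem_filter.1 ha).2
  have hmemX : ∀ a, a ∈ AA → (∀ o ∈ Y₀, Db a o) → a ∈ X := by
    intro a haAA hao
    exact Finset.mem_filter.2 ⟨haAA, hao⟩
  have hsub : X₀ ⊆ X ∩ A := by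
    intro a ha
    exact Finset.mem_inter.2 ⟨hmemX a (hA (hX₀A ha)) (fun o ho => hrel a ha o ho), hX₀A ha⟩
  have hrXA : IsRect Db A OO (X ∩ A) Y₀ :=
    ⟨Finset.inter_subset_right, hY₀O,
      fun a ha o ho => hXrel a (Finset.mem_inter.1 ha).1 o ho⟩
  have hX₀eq : X₀ = X ∩ A := (hmax _ _ hrXA hsub (subset_refl _)).1
  refine ⟨X, Y₀, ⟨⟨hXA, hY₀O, hXrel⟩, ?_⟩, ?_, hX₀eq, rfl⟩
  · intro X' Y' ⟨hX'A, hY'O, hrel'⟩ hXX' hYY'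
    have hY₀eq : Y₀ = Y' := by
      have hr : IsRect Db A OO X₀ Y' := by
        refine ⟨hX₀A, hY'O, fun a ha o ho => ?_⟩
        exact hrel' a (hXX' (Finset.mem_inter.1 (hX₀eq ▸ ha)).1) o ho
      exact (hmax _ _ hr (subset_refl _) hYY').2
    constructor
    · apply subset_antisymm hXX'
      intro a ha
      exact hmemX a (hX'A ha) (fun o ho => hrel' a ha o (hY₀eq ▸ ho))
    · exact hY₀eq
  · intro X' Y' hc' hcap
    obtain ⟨⟨hX'A, hY'O, hrel'⟩, hmax'⟩ := hc'
    have hY'Y₀ : Y' ⊆ Y₀ := by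
      have hr : IsRect Db A OO X₀ (Y₀ ∪ Y') := by
        refine ⟨hX₀A, Finset.union_subset hY₀O hY'O, fun a ha o ho => ?_⟩
        have haX' : a ∈ X' := by
          have : a ∈ X' ∩ A := by rw [hcap]; exact hX₀eq ▸ ha
          exact (Finset.mem_inter.1 this).1
        rcases Finset.mem_union.1 ho with ho | ho
        · exact hrel a ha o ho
        · exact hrel' a haX' o ho
      have := (hmax _ _ hr (subset_refl _) Finset.subset_union_left).2
      intro o ho
      rw [this]
      exact Finset.mem_union.2 (Or.inr ho)
    refine ⟨?_, hY'Y₀⟩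
    have hr : IsRect Db AA OO (X' ∪ X) Y' := by
      refine ⟨Finset.union_subset hX'A hXA, hY'O, fun a ha o ho => ?_⟩
      rcases Finset.mem_union.1 ha with ha | ha
      · exact hrel' a ha o ho
      · exact hXrel a ha o (hY'Y₀ ho)
    have := (hmax' _ _ hr Finset.subset_union_left (subset_refl _)).1
    intro a ha
    rw [this]
    exact Finset.mem_union.2 (Or.inr ha)
end

section
/- If (X,Y) is a formal concept of Db that is the least element of its A-equivalence class, then (X ∩ A, Y) is a formal concept of the projected database π_A(Db) (the ⊇ direction of the projection theorem). -/
variable {α β : Type*} [DecidableEq α] [DecidableEq β]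

/-- Every rectangle extends to a concept. -/
lemma exists_concept_above (Db : α → β → Prop) (AA : Finset α) (OO : Finset β) :
    ∀ n X Y, (AA.card - X.card) + (OO.card - Y.card) ≤ n → IsRect Db AA OO X Y →
    ∃ X' Y', IsConcept Db AA OO X' Y' ∧ X ⊆ X' ∧ Y ⊆ Y' := by
  intro n
  induction n with
  | zero =>
    intro X Y hn hr
    refine ⟨X, Y, ⟨hr, ?_⟩, subset_rfl, subset_rfl⟩
    intro X' Y' hr' hX hY
    have hX1 : X'.card ≤ AA.card := Finset.card_le_card hr'.1
    have hY1 : Y'.card ≤ OO.card := Finset.card_le_card hr'.2.1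
    have hX2 : X.card ≤ X'.card := Finset.card_le_card hX
    have hY2 : Y.card ≤ Y'.card := Finset.card_le_card hY
    exact ⟨Finset.eq_of_subset_of_card_le hX (by omega),
      Finset.eq_of_subset_of_card_le hY (by omega)⟩
  | succ n ih =>
    intro X Y hn hr
    by_cases hmax : ∀ X' Y', IsRect Db AA OO X' Y' → X ⊆ X' → Y ⊆ Y' → X = X' ∧ Y = Y'
    · exact ⟨X, Y, ⟨hr, hmax⟩, subset_rfl, subset_rfl⟩
    · push_neg at hmax
      obtain ⟨X', Y', hr', hX, hY, hne⟩ := hmax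
      have hX1 : X'.card ≤ AA.card := Finset.card_le_card hr'.1
      have hY1 : Y'.card ≤ OO.card := Finset.card_le_card hr'.2.1
      have hX2 : X.card ≤ X'.card := Finset.card_le_card hX
      have hY2 : Y.card ≤ Y'.card := Finset.card_le_card hY
      have hlt : X.card < X'.card ∨ Y.card < Y'.card := by
        by_contra hc
        push_neg at hc
        exact hne (Finset.eq_of_subset_of_card_le hX hc.1)
          (Finset.eq_of_subset_of_card_le hY hc.2)
      obtain ⟨X'', Y'', hc, h1, h2⟩ := ih X' Y' (by omega) hr'
      exact ⟨X'', Y'', hc, hX.trans h1, hY.trans h2⟩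

/-- If a concept `(X,Y)` of `Db` is the least element of its
`A`-equivalence class then `(X ∩ A, Y)` is a concept of the projected
database `π_A(Db)`. -/
theorem projection_supset (Db : α → β → Prop) (AA : Finset α) (OO : Finset β)
    (A : Finset α) (hA : A ⊆ AA) (X : Finset α) (Y : Finset β)
    (h : IsConcept Db AA OO X Y)
    (hle : ∀ X' Y', IsConcept Db AA OO X' Y' → X' ∩ A = X ∩ A → X ⊆ X' ∧ Y' ⊆ Y) :
    IsConcept Db A OO (X ∩ A) Y := by
  obtain ⟨⟨hXA, hYO, hrel⟩, hmax⟩ := h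
  refine ⟨⟨Finset.inter_subset_right, hYO,
    fun a ha o ho => hrel a (Finset.mem_of_mem_inter_left ha) o ho⟩, ?_⟩
  intro X₂ Y₂ ⟨hX₂A, hY₂O, hrel₂⟩ hXsub hYsub
  -- Step 1: X₂ = X ∩ A
  have hX₂X : X₂ ⊆ X := by
    have hrect : IsRect Db AA OO (X ∪ X₂) Y :=
      ⟨Finset.union_subset hXA (hX₂A.trans hA), hYO, by
        intro a ha o ho
        rcases Finset.mem_union.mp ha with h1 | h1
        · exact hrel a h1 o ho
        · exact hrel₂ a h1 o (hYsub ho)⟩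
    have := (hmax _ _ hrect Finset.subset_union_left subset_rfl).1
    intro a ha
    rw [this]
    exact Finset.mem_union_right _ ha
  have hX₂eq : X₂ = X ∩ A :=
    subset_antisymm (Finset.subset_inter hX₂X hX₂A) hXsub
  -- Step 2: Y₂ = Y.  Extend (X ∩ A, Y₂) to a concept (X₀, Y₀) of Db.
  have hrect2 : IsRect Db AA OO (X ∩ A) Y₂ :=
    ⟨Finset.inter_subset_left.trans hXA, hY₂O, by
      intro a ha o ho
      exact hrel₂ a (hX₂eq ▸ ha) o ho⟩
  obtain ⟨X₀, Y₀, hc₀, hX₀, hY₀⟩ := exists_concept_above Db AA OO _ _ _ le_rfl hrect2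
  have hX₀A : X₀ ∩ A = X ∩ A := by
    apply subset_antisymm
    · -- X₀ ∩ A ⊆ X via maximality of (X,Y)
      have hrect3 : IsRect Db AA OO (X ∪ X₀ ∩ A) Y :=
        ⟨Finset.union_subset hXA (Finset.inter_subset_right.trans hA), hYO, by
          intro a ha o ho
          rcases Finset.mem_union.mp ha with h1 | h1
          · exact hrel a h1 o ho
          · exact hc₀.1.2.2 a (Finset.mem_of_mem_inter_left h1) o
              (hY₀ (hYsub ho))⟩
      have := (hmax _ _ hrect3 Finset.subset_union_left subset_rfl).1
      intro a ha
      exact Finset.mem_inter.mpr ⟨this ▸ Finset.mem_union_right _ ha,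
        (Finset.mem_inter.mp ha).2⟩
    · exact Finset.subset_inter (fun a ha => hX₀ ha) Finset.inter_subset_right
  have hY₀Y : Y₀ ⊆ Y := (hle X₀ Y₀ hc₀ hX₀A).2
  exact ⟨hX₂eq.symm, subset_antisymm hYsub (hY₀.trans hY₀Y)⟩
end

section
/- Let 𝒞 be a collection of formal concepts of a database Db, A a set of attributes, and p a selection predicate on bi-sets such that p(X ∩ A, Y) = p(X, Y) for all concepts (X,Y). Then π_A(σ_p(𝒞)) = σ_p(π_A(𝒞)), i.e., projection onto A and selection by p commute. -/
variable {α β : Type*} [DecidableEq α] [DecidableEq β]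

/-- The set of least elements of the `A`-equivalence classes of the concepts
of `Db`. -/
def LEA (Db : α → β → Prop) (AA : Finset α) (OO : Finset β) (A : Finset α) :
    Set (Finset α × Finset β) :=
  {C | IsConcept Db AA OO C.1 C.2 ∧
    ∀ X' Y', IsConcept Db AA OO X' Y' → X' ∩ A = C.1 ∩ A → C.1 ⊆ X' ∧ Y' ⊆ C.2}

/-- Selection of a collection of concepts by a predicate. -/
def sel (p : Finset α → Finset β → Prop) (C : Set (Finset α × Finset β)) :
    Set (Finset α × Finset β) :=
  {c ∈ C | p c.1 c.2}

/-- Projection of a collection of concepts of `Db` on the attribute set `A`. -/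
def projColl (Db : α → β → Prop) (AA : Finset α) (OO : Finset β) (A : Finset α)
    (C : Set (Finset α × Finset β)) : Set (Finset α × Finset β) :=
  (fun c : Finset α × Finset β => (c.1 ∩ A, c.2)) '' (C ∩ LEA Db AA OO A)

/-- Projection on `A` and selection by `p` commute provided
`p (X ∩ A) Y = p X Y` for all concepts `(X,Y)`. -/
theorem proj_sel_commute (Db : α → β → Prop) (AA : Finset α) (OO : Finset β)
    (A : Finset α) (p : Finset α → Finset β → Prop)
    (C : Set (Finset α × Finset β))
    (hC : ∀ c ∈ C, IsConcept Db AA OO c.1 c.2)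
    (hp : ∀ X Y, IsConcept Db AA OO X Y → (p (X ∩ A) Y ↔ p X Y)) :
    projColl Db AA OO A (sel p C) = sel p (projColl Db AA OO A C) := by
  ext c
  constructor
  · rintro ⟨d, ⟨⟨hdC, hpd⟩, hdLE⟩, rfl⟩
    refine ⟨⟨d, ⟨hdC, hdLE⟩, rfl⟩, ?_⟩
    exact (hp d.1 d.2 (hC d hdC)).2 hpd
  · rintro ⟨⟨d, ⟨hdC, hdLE⟩, rfl⟩, hpc⟩
    exact ⟨d, ⟨⟨hdC, (hp d.1 d.2 (hC d hdC)).1 hpc⟩, hdLE⟩, rfl⟩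
end

section
/- For any set O of objects, each O-equivalence class of formal concepts of a database Db has a greatest element with respect to the order ⪯ (equivalently, a least element for the dual order), where two concepts (X,Y), (X',Y') are O-equivalent iff Y ∩ O = Y' ∩ O. -/
variable {α β : Type*} [DecidableEq α] [DecidableEq β]

/-- Every `O`-equivalence class of formal concepts (`Y ∩ O = Y' ∩ O`) has a
greatest element for the order `(X,Y) ⪯ (X',Y') ↔ X ⊆ X' ∧ Y' ⊆ Y`. -/
theorem O_equiv_class_has_greatest (Db : α → β → Prop) (AA : Finset α) (OO : Finset β)
    (O : Finset β) (X : Finset α) (Y : Finset β)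
    (h : IsConcept Db AA OO X Y) :
    ∃ X₀ Y₀, IsConcept Db AA OO X₀ Y₀ ∧ Y₀ ∩ O = Y ∩ O ∧
      ∀ X' Y', IsConcept Db AA OO X' Y' → Y' ∩ O = Y ∩ O → X' ⊆ X₀ ∧ Y₀ ⊆ Y' := by
  classical
  obtain ⟨⟨hXA, hYO, hRel⟩, hMax⟩ := h
  set X₀ : Finset α := AA.filter (fun a => ∀ o ∈ Y ∩ O, Db a o) with hX₀
  set Y₀ : Finset β := OO.filter (fun o => ∀ a ∈ X₀, Db a o) with hY₀
  have memX₀ : ∀ a, a ∈ X₀ ↔ a ∈ AA ∧ ∀ o ∈ Y ∩ O, Db a o := by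
    intro a; simp [hX₀]
  have memY₀ : ∀ o, o ∈ Y₀ ↔ o ∈ OO ∧ ∀ a ∈ X₀, Db a o := by
    intro o; simp [hY₀]
  -- X ⊆ X₀
  have hXX₀ : X ⊆ X₀ := by
    intro a ha
    exact (memX₀ a).2 ⟨hXA ha, fun o ho => hRel a ha o (Finset.mem_inter.mp ho).1⟩
  -- (X₀, Y₀) is a rectangle
  have hRect₀ : IsRect Db AA OO X₀ Y₀ := by
    refine ⟨Finset.filter_subset _ _, Finset.filter_subset _ _, ?_⟩
    intro a ha o ho
    exact ((memY₀ o).mp ho).2 a ha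
  -- Y ∩ O ⊆ Y₀
  have hYOY₀ : Y ∩ O ⊆ Y₀ := by
    intro o ho
    refine (memY₀ o).2 ⟨hYO (Finset.mem_inter.mp ho).1, fun a ha => ?_⟩
    exact ((memX₀ a).mp ha).2 o ho
  -- Y₀ ∩ O ⊆ Y ∩ O, using maximality of (X, Y)
  have hY₀O : Y₀ ∩ O = Y ∩ O := by
    apply Finset.Subset.antisymm
    · intro o ho
      obtain ⟨hoY₀, hoO⟩ := Finset.mem_inter.mp ho
      have hoOO := ((memY₀ o).mp hoY₀).1
      have hrect : IsRect Db AA OO X (insert o Y) := by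
        refine ⟨hXA, Finset.insert_subset hoOO hYO, ?_⟩
        intro a ha o' ho'
        rcases Finset.mem_insert.mp ho' with heq | ho'
        · exact heq ▸ ((memY₀ o).mp hoY₀).2 a (hXX₀ ha)
        · exact hRel a ha o' ho'
      have := (hMax X (insert o Y) hrect le_rfl (Finset.subset_insert _ _)).2
      have hoY : o ∈ Y := this ▸ Finset.mem_insert_self o Y
      exact Finset.mem_inter.mpr ⟨hoY, hoO⟩
    · intro o ho
      exact Finset.mem_inter.mpr ⟨hYOY₀ ho, (Finset.mem_inter.mp ho).2⟩
  -- (X₀, Y₀) is a concept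
  have hConcept₀ : IsConcept Db AA OO X₀ Y₀ := by
    refine ⟨hRect₀, fun X' Y' hrect hX hY => ?_⟩
    obtain ⟨hX'A, hY'O, hRel'⟩ := hrect
    have hX'X₀ : X' ⊆ X₀ := by
      intro a ha
      refine (memX₀ a).2 ⟨hX'A ha, fun o ho => ?_⟩
      exact hRel' a ha o (hY (hYOY₀ ho))
    have hXeq : X₀ = X' := Finset.Subset.antisymm hX hX'X₀
    refine ⟨hXeq, Finset.Subset.antisymm hY ?_⟩
    intro o ho
    refine (memY₀ o).2 ⟨hY'O ho, fun a ha => ?_⟩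
    exact hRel' a (hXeq ▸ ha) o ho
  refine ⟨X₀, Y₀, hConcept₀, hY₀O, ?_⟩
  rintro X' Y' ⟨⟨hX'A, hY'O, hRel'⟩, hMax'⟩ hYeq
  have hX'X₀ : X' ⊆ X₀ := by
    intro a ha
    refine (memX₀ a).2 ⟨hX'A ha, fun o ho => ?_⟩
    have : o ∈ Y' ∩ O := hYeq ▸ ho
    exact hRel' a ha o (Finset.mem_inter.mp this).1
  refine ⟨hX'X₀, ?_⟩
  intro o ho
  have hoOO := ((memY₀ o).mp ho).1
  have hrect : IsRect Db AA OO X' (insert o Y') := by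
    refine ⟨hX'A, Finset.insert_subset hoOO hY'O, ?_⟩
    intro a ha o' ho'
    rcases Finset.mem_insert.mp ho' with heq | ho'
    · exact heq ▸ ((memY₀ o).mp ho).2 a (hX'X₀ ha)
    · exact hRel' a ha o' ho'
  have := (hMax' X' (insert o Y') hrect le_rfl (Finset.subset_insert _ _)).2
  exact this ▸ Finset.mem_insert_self o Y'
end

section
/- Let Db be a database, O a set of objects, and π_O(Db) the restriction of Db to the objects in O. Then the set of formal concepts of π_O(Db) equals { (X, Y ∩ O) : (X,Y) ∈ GE_O }, where GE_O is the set of greatest elements (for ⪯) of the O-equivalence classes of the concepts of Db. -/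
variable {α β : Type*} [DecidableEq α] [DecidableEq β]

/-- Object-side dual of the projection theorem: the concepts of the database
restricted to the objects of `O` are exactly `(X, Y ∩ O)` for `(X,Y)`
ranging over the greatest elements of the `O`-equivalence classes. -/
theorem projection_theorem_dual (Db : α → β → Prop) (AA : Finset α) (OO : Finset β)
    (O : Finset β) (hO : O ⊆ OO) :
    {C : Finset α × Finset β | IsConcept Db AA O C.1 C.2} =
      (fun C : Finset α × Finset β => (C.1, C.2 ∩ O)) ''
        {C : Finset α × Finset β | IsConcept Db AA OO C.1 C.2 ∧
          ∀ X' Y', IsConcept Db AA OO X' Y' → Y' ∩ O = C.2 ∩ O →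
            X' ⊆ C.1 ∧ C.2 ⊆ Y'} := by
  classical
  ext ⟨X, Y⟩
  simp only [Set.mem_setOf_eq, Set.mem_image, Prod.mk.injEq, Prod.exists]
  constructor
  · rintro ⟨⟨hXA, hYO, hrel⟩, hmax⟩
    set Yh : Finset β := OO.filter (fun o => ∀ a ∈ X, Db a o) with hYhdef
    have hmemYh : ∀ o, o ∈ Yh ↔ o ∈ OO ∧ ∀ a ∈ X, Db a o := by
      intro o; simp [hYhdef]
    have hYsub : Y ⊆ Yh := fun o ho =>
      (hmemYh o).2 ⟨hO (hYO ho), fun a ha => hrel a ha o ho⟩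
    have hrect : IsRect Db AA OO X Yh :=
      ⟨hXA, Finset.filter_subset _ _, fun a ha o ho => ((hmemYh o).1 ho).2 a ha⟩
    have hconc : IsConcept Db AA OO X Yh := by
      refine ⟨hrect, fun X' Y' hr' hX' hY' => ?_⟩
      have hXX : X = X' := by
        have hr2 : IsRect Db AA O X' Y :=
          ⟨hr'.1, hYO, fun a ha o ho => hr'.2.2 a ha o (hY' (hYsub ho))⟩
        exact (hmax X' Y hr2 hX' (subset_refl Y)).1
      refine ⟨hXX, subset_antisymm hY' fun o ho => (hmemYh o).2
        ⟨hr'.2.1 ho, fun a ha => hr'.2.2 a (hXX ▸ ha) o ho⟩⟩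
    have hcap : Yh ∩ O = Y := by
      have hr : IsRect Db AA O X (Yh ∩ O) :=
        ⟨hXA, Finset.inter_subset_right, fun a ha o ho =>
          ((hmemYh o).1 (Finset.mem_inter.1 ho).1).2 a ha⟩
      exact ((hmax X (Yh ∩ O) hr (subset_refl X)
        (fun o ho => Finset.mem_inter.2 ⟨hYsub ho, hYO ho⟩)).2).symm
    refine ⟨X, Yh, ⟨hconc, fun X' Y' hc' hcap' => ?_⟩, rfl, hcap⟩
    have hYeq : Y' ∩ O = Y := by rw [hcap', hcap]
    constructor
    · -- X' ⊆ X
      have hr : IsRect Db AA O (X ∪ X') Y := by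
        refine ⟨Finset.union_subset hXA hc'.1.1, hYO, fun a ha o ho => ?_⟩
        rcases Finset.mem_union.1 ha with h | h
        · exact hrel a h o ho
        · exact hc'.1.2.2 a h o (by
            have : o ∈ Y' ∩ O := hYeq ▸ ho
            exact (Finset.mem_inter.1 this).1)
      have := (hmax (X ∪ X') Y hr Finset.subset_union_left (subset_refl Y)).1
      exact fun a ha => this ▸ Finset.mem_union_right _ ha
    · -- Yh ⊆ Y'
      have hXsub : X' ⊆ X := by
        have hr : IsRect Db AA O (X ∪ X') Y := by
          refine ⟨Finset.union_subset hXA hc'.1.1, hYO, fun a ha o ho => ?_⟩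
          rcases Finset.mem_union.1 ha with h | h
          · exact hrel a h o ho
          · exact hc'.1.2.2 a h o (by
              have : o ∈ Y' ∩ O := hYeq ▸ ho
              exact (Finset.mem_inter.1 this).1)
        have := (hmax (X ∪ X') Y hr Finset.subset_union_left (subset_refl Y)).1
        exact fun a ha => this ▸ Finset.mem_union_right _ ha
      have hr : IsRect Db AA OO X' (Y' ∪ Yh) := by
        refine ⟨hc'.1.1, Finset.union_subset hc'.1.2.1 (Finset.filter_subset _ _),
          fun a ha o ho => ?_⟩
        rcases Finset.mem_union.1 ho with h | h
        · exact hc'.1.2.2 a ha o h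
        · exact ((hmemYh o).1 h).2 a (hXsub ha)
      have := (hc'.2 X' (Y' ∪ Yh) hr (subset_refl X') Finset.subset_union_left).2
      exact fun o ho => this ▸ Finset.mem_union_right _ ho
  · rintro ⟨X₀, Y₀, ⟨⟨⟨hXA, hYO, hrel⟩, hmax⟩, hgr⟩, hX, hY⟩
    subst hX; subst hY
    refine ⟨⟨hXA, Finset.inter_subset_right, fun a ha o ho =>
      hrel a ha o (Finset.mem_inter.1 ho).1⟩, fun X' Y' hr' hX' hY' => ?_⟩
    -- closure of X' over OO
    set Y'' : Finset β := OO.filter (fun o => ∀ a ∈ X', Db a o) with hY''def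
    have hmemY'' : ∀ o, o ∈ Y'' ↔ o ∈ OO ∧ ∀ a ∈ X', Db a o := by
      intro o; simp [hY''def]
    set X'' : Finset α := AA.filter (fun a => ∀ o ∈ Y'', Db a o) with hX''def
    have hmemX'' : ∀ a, a ∈ X'' ↔ a ∈ AA ∧ ∀ o ∈ Y'', Db a o := by
      intro a; simp [hX''def]
    have hY'sub : Y' ⊆ Y'' := fun o ho =>
      (hmemY'' o).2 ⟨hO (hr'.2.1 ho), fun a ha => hr'.2.2 a ha o ho⟩
    have hX'sub : X' ⊆ X'' := fun a ha =>
      (hmemX'' a).2 ⟨hr'.1 ha, fun o ho => ((hmemY'' o).1 ho).2 a ha⟩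
    have hconc'' : IsConcept Db AA OO X'' Y'' := by
      refine ⟨⟨Finset.filter_subset _ _, Finset.filter_subset _ _,
        fun a ha o ho => ((hmemX'' a).1 ha).2 o ho⟩, fun A B hrAB hA hB => ?_⟩
      have hBY : B = Y'' := subset_antisymm
        (fun o ho => (hmemY'' o).2 ⟨hrAB.2.1 ho,
          fun a ha => hrAB.2.2 a (hA (hX'sub ha)) o ho⟩) hB
      have hAX : A = X'' := subset_antisymm
        (fun a ha => (hmemX'' a).2 ⟨hrAB.1 ha,
          fun o ho => hrAB.2.2 a ha o (hB ho)⟩) hA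
      exact ⟨hAX.symm, hBY.symm⟩
    have hcapsub : Y'' ∩ O ⊆ Y₀ := by
      have hr : IsRect Db AA OO X₀ (Y₀ ∪ (Y'' ∩ O)) := by
        refine ⟨hXA, Finset.union_subset hYO
          (Finset.inter_subset_left.trans (Finset.filter_subset _ _)), fun a ha o ho => ?_⟩
        rcases Finset.mem_union.1 ho with h | h
        · exact hrel a ha o h
        · exact ((hmemY'' o).1 (Finset.mem_inter.1 h).1).2 a (hX' ha)
      have := (hmax X₀ (Y₀ ∪ (Y'' ∩ O)) hr (subset_refl X₀) Finset.subset_union_left).2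
      exact fun o ho => this ▸ Finset.mem_union_right _ ho
    have heqcap : Y'' ∩ O = Y₀ ∩ O := by
      apply subset_antisymm
      · exact fun o ho => Finset.mem_inter.2 ⟨hcapsub ho, (Finset.mem_inter.1 ho).2⟩
      · exact fun o ho => Finset.mem_inter.2
          ⟨hY'sub (hY' ho), (Finset.mem_inter.1 ho).2⟩
    obtain ⟨hX''X₀, hY₀Y''⟩ := hgr X'' Y'' hconc'' heqcap
    have hXeq : X₀ = X' := subset_antisymm hX' (fun a ha => hX''X₀ (hX'sub ha))
    have hYeq : Y₀ ∩ O = Y' := by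
      refine subset_antisymm hY' fun o ho => ?_
      have : o ∈ Y'' ∩ O := Finset.mem_inter.2 ⟨hY'sub ho, hr'.2.1 ho⟩
      exact heqcap ▸ this
    exact ⟨hXeq, hYeq⟩
end

section
/- Let (X,Y) be a formal concept of Db that is the least element of its A-equivalence class, and suppose (X',Y') is a 1-rectangle of π_A(Db) containing (X ∩ A, Y) componentwise. Then X' = X ∩ A. -/
variable {α β : Type*} [DecidableEq α] [DecidableEq β]

/-- If `(X,Y)` is a concept of `Db` that is the least element of its
`A`-equivalence class, and `(X',Y')` is a 1-rectangle of `π_A(Db)`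
containing `(X ∩ A, Y)` componentwise, then `X' = X ∩ A`. -/
theorem rect_above_least (Db : α → β → Prop) (AA : Finset α) (OO : Finset β)
    (A : Finset α) (hA : A ⊆ AA) (X X' : Finset α) (Y Y' : Finset β)
    (h : IsConcept Db AA OO X Y)
    (hle : ∀ X₁ Y₁, IsConcept Db AA OO X₁ Y₁ → X₁ ∩ A = X ∩ A → X ⊆ X₁ ∧ Y₁ ⊆ Y)
    (hr : IsRect Db A OO X' Y') (hX : X ∩ A ⊆ X') (hY : Y ⊆ Y') :
    X' = X ∩ A := by
  obtain ⟨⟨hXA, hYO, hXY⟩, hmax⟩ := h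
  obtain ⟨hX'A, hY'O, hX'Y'⟩ := hr
  have hrect : IsRect Db AA OO (X ∪ X') Y := by
    refine ⟨Finset.union_subset hXA (hX'A.trans hA), hYO, ?_⟩
    intro a ha o ho
    rcases Finset.mem_union.mp ha with h1 | h1
    · exact hXY a h1 o ho
    · exact hX'Y' a h1 o (hY ho)
  have heq := (hmax (X ∪ X') Y hrect Finset.subset_union_left (subset_refl Y)).1
  have hsub : X' ⊆ X := by
    intro a ha
    rw [heq]
    exact Finset.mem_union_right _ ha
  apply Finset.Subset.antisymm
  · exact fun a ha => Finset.mem_inter.mpr ⟨hsub ha, hX'A ha⟩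
  · exact hX
end

section
/- If C₁ = (X₁,Y₁) and C₂ = (X₂,Y₂) are A-equivalent formal concepts of Db and C = (X₁ ∩ X₂, Y) is a formal concept with Y₁ ∪ Y₂ ⊆ Y, then C is A-equivalent to both C₁ and C₂, and C ⪯ C₁ and C ⪯ C₂. -/
variable {α β : Type*} [DecidableEq α] [DecidableEq β]

/-- If `(X₁,Y₁)` and `(X₂,Y₂)` are `A`-equivalent concepts and
`(X₁ ∩ X₂, Y)` is a concept with `Y₁ ∪ Y₂ ⊆ Y`, then it is `A`-equivalent
to both and below both for `⪯`. -/
theorem inter_concept_below (Db : α → β → Prop) (AA : Finset α) (OO : Finset β)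
    (A : Finset α) (X₁ X₂ : Finset α) (Y₁ Y₂ Y : Finset β)
    (h₁ : IsConcept Db AA OO X₁ Y₁) (h₂ : IsConcept Db AA OO X₂ Y₂)
    (heq : X₁ ∩ A = X₂ ∩ A)
    (h : IsConcept Db AA OO (X₁ ∩ X₂) Y) (hY : Y₁ ∪ Y₂ ⊆ Y) :
    ((X₁ ∩ X₂) ∩ A = X₁ ∩ A ∧ (X₁ ∩ X₂) ∩ A = X₂ ∩ A) ∧
    (X₁ ∩ X₂ ⊆ X₁ ∧ Y₁ ⊆ Y) ∧ (X₁ ∩ X₂ ⊆ X₂ ∧ Y₂ ⊆ Y) := by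
  have key : (X₁ ∩ X₂) ∩ A = X₁ ∩ A := by
    apply Finset.Subset.antisymm
    · intro a ha
      simp only [Finset.mem_inter] at ha ⊢
      exact ⟨ha.1.1, ha.2⟩
    · intro a ha
      have ha2 : a ∈ X₂ ∩ A := heq ▸ ha
      simp only [Finset.mem_inter] at ha ha2 ⊢
      exact ⟨⟨ha.1, ha2.1⟩, ha.2⟩
  refine ⟨⟨key, key.trans heq⟩, ⟨Finset.inter_subset_left, ?_⟩,
    ⟨Finset.inter_subset_right, ?_⟩⟩
  · exact (Finset.subset_union_left).trans hY
  · exact (Finset.subset_union_right).trans hY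
end

section
/- Let Db be a database, A a set of attributes, and define the database projection π_A and the concept-collection projection π_A (via least elements of A-equivalence classes). Then Concepts(π_A(Db)) = π_A(Concepts(Db)), where Concepts(·) denotes the set of all formal concepts of a database. -/
variable {α β : Type*} [DecidableEq α] [DecidableEq β]

/-- `Concepts(π_A(Db)) = π_A(Concepts(Db))`: the concepts of the projected
database are the projection of the collection of concepts of `Db`. -/
theorem concepts_proj_db_eq_proj_concepts (Db : α → β → Prop)
    (AA : Finset α) (OO : Finset β) (A : Finset α) (hA : A ⊆ AA) :
    {C : Finset α × Finset β | IsConcept Db A OO C.1 C.2} =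
      projColl Db AA OO A {C : Finset α × Finset β | IsConcept Db AA OO C.1 C.2} := by
  classical
  ext ⟨X, Y⟩
  simp only [Set.mem_setOf_eq, projColl, Set.mem_image, Set.mem_inter_iff, Set.mem_setOf_eq,
    LEA]
  constructor
  · rintro ⟨⟨hXA, hYO, hrel⟩, hmax⟩
    set Xb : Finset α := AA.filter (fun a => ∀ o ∈ Y, Db a o) with hXbdef
    have hXXb : X ⊆ Xb := fun a ha =>
      Finset.mem_filter.2 ⟨hA (hXA ha), fun o ho => hrel a ha o ho⟩
    have hXbAA : Xb ⊆ AA := Finset.filter_subset _ _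
    have hXbrel : ∀ a ∈ Xb, ∀ o ∈ Y, Db a o := fun a ha => (Finset.mem_filter.1 ha).2
    have hrectb : IsRect Db AA OO Xb Y := ⟨hXbAA, hYO, hXbrel⟩
    have hXeq : X = Xb ∩ A := by
      have hr : IsRect Db A OO (Xb ∩ A) Y :=
        ⟨Finset.inter_subset_right, hYO, fun a ha o ho =>
          hXbrel a (Finset.mem_of_mem_inter_left ha) o ho⟩
      exact (hmax _ _ hr (Finset.subset_inter hXXb hXA) (subset_refl Y)).1
    have hconb : IsConcept Db AA OO Xb Y := by
      refine ⟨hrectb, fun X' Y' h' hXX' hYY' => ?_⟩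
      obtain ⟨hX'A, hY'O, hrel'⟩ := h'
      have hYeq : Y = Y' := by
        have hr : IsRect Db A OO (Xb ∩ A) Y' :=
          ⟨Finset.inter_subset_right, hY'O, fun a ha o ho =>
            hrel' a (hXX' (Finset.mem_of_mem_inter_left ha)) o ho⟩
        exact (hmax _ _ hr (Finset.subset_inter hXXb hXA) hYY').2
      have hX' : X' ⊆ Xb := fun a ha =>
        Finset.mem_filter.2 ⟨hX'A ha, fun o ho => hrel' a ha o (hYeq ▸ ho)⟩
      exact ⟨Finset.Subset.antisymm hXX' hX', hYeq⟩
    refine ⟨(Xb, Y), ⟨hconb, hconb, fun X' Y' hcon' heq => ?_⟩, ?_⟩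
    · obtain ⟨⟨hX'AA, hY'O, hrel'⟩, hmax'⟩ := hcon'
      have hXX' : X = X' ∩ A := hXeq.trans heq.symm
      have hY'Y : Y' ⊆ Y := by
        have hr : IsRect Db A OO X (Y ∪ Y') :=
          ⟨hXA, Finset.union_subset hYO hY'O, fun a ha o ho => by
            rcases Finset.mem_union.1 ho with h | h
            · exact hrel a ha o h
            · exact hrel' a (Finset.mem_of_mem_inter_left (hXX' ▸ ha)) o h⟩
        have := (hmax _ _ hr (subset_refl X) Finset.subset_union_left).2
        exact fun o ho => this ▸ Finset.mem_union_right _ ho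
      have : X' = X' ∪ Xb := by
        have hr : IsRect Db AA OO (X' ∪ Xb) Y' :=
          ⟨Finset.union_subset hX'AA hXbAA, hY'O, fun a ha o ho => by
            rcases Finset.mem_union.1 ha with h | h
            · exact hrel' a h o ho
            · exact hXbrel a h o (hY'Y ho)⟩
        exact (hmax' _ _ hr Finset.subset_union_left (subset_refl Y')).1
      exact ⟨fun a ha => this ▸ Finset.mem_union_right _ ha, hY'Y⟩
    · exact Prod.ext hXeq.symm rfl
  · rintro ⟨⟨Xb, Yb⟩, ⟨hconb, _, hlea⟩, heq⟩
    obtain ⟨⟨hXbAA, hYbO, hXbrel⟩, hmaxb⟩ := hconb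
    obtain ⟨rfl, rfl⟩ := Prod.mk.injEq .. ▸ heq
    refine ⟨⟨Finset.inter_subset_right, hYbO, fun a ha o ho =>
      hXbrel a (Finset.mem_of_mem_inter_left ha) o ho⟩, ?_⟩
    rintro X' Y' ⟨hX'A, hY'O, hrel'⟩ hsubX hsubY
    set Y'' : Finset β := OO.filter (fun o => ∀ a ∈ X', Db a o) with hY''def
    set X'' : Finset α := AA.filter (fun a => ∀ o ∈ Y'', Db a o) with hX''def
    have hY'Y'' : Y' ⊆ Y'' := fun o ho =>
      Finset.mem_filter.2 ⟨hY'O ho, fun a ha => hrel' a ha o ho⟩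
    have hX'X'' : X' ⊆ X'' := fun a ha =>
      Finset.mem_filter.2 ⟨hA (hX'A ha), fun o ho => (Finset.mem_filter.1 ho).2 a ha⟩
    have hX''AA : X'' ⊆ AA := Finset.filter_subset _ _
    have hY''OO : Y'' ⊆ OO := Finset.filter_subset _ _
    have hX''rel : ∀ a ∈ X'', ∀ o ∈ Y'', Db a o := fun a ha => (Finset.mem_filter.1 ha).2
    have hcon'' : IsConcept Db AA OO X'' Y'' := by
      refine ⟨⟨hX''AA, hY''OO, hX''rel⟩, fun X₁ Y₁ ⟨hX₁, hY₁, hrel₁⟩ hXX₁ hYY₁ => ?_⟩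
      constructor
      · refine Finset.Subset.antisymm hXX₁ fun a ha => Finset.mem_filter.2
          ⟨hX₁ ha, fun o ho => hrel₁ a ha o (hYY₁ ho)⟩
      · refine Finset.Subset.antisymm hYY₁ fun o ho => Finset.mem_filter.2
          ⟨hY₁ ho, fun a ha => hrel₁ a (hXX₁ (hX'X'' ha)) o ho⟩
    have hYbY'' : Yb ⊆ Y'' := hsubY.trans hY'Y''
    have hX''Xb : X'' ⊆ Xb := by
      have hr : IsRect Db AA OO (Xb ∪ X'') Yb :=
        ⟨Finset.union_subset hXbAA hX''AA, hYbO, fun a ha o ho => by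
          rcases Finset.mem_union.1 ha with h | h
          · exact hXbrel a h o ho
          · exact hX''rel a h o (hYbY'' ho)⟩
      have h2 : Xb = Xb ∪ X'' := (hmaxb _ _ hr Finset.subset_union_left (subset_refl Yb)).1
      exact fun a ha => h2 ▸ Finset.mem_union_right _ ha
    have hAeq : X'' ∩ A = Xb ∩ A := by
      apply Finset.Subset.antisymm
      · exact fun a ha => Finset.mem_inter.2
          ⟨hX''Xb (Finset.mem_of_mem_inter_left ha), Finset.mem_of_mem_inter_right ha⟩
      · exact fun a ha => Finset.mem_inter.2
          ⟨hX'X'' (hsubX ha), Finset.mem_of_mem_inter_right ha⟩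
    obtain ⟨hXbX'', hY''Yb⟩ := hlea X'' Y'' hcon'' hAeq
    constructor
    · refine Finset.Subset.antisymm hsubX fun a ha => ?_
      have : a ∈ X'' ∩ A := Finset.mem_inter.2 ⟨hX'X'' ha, hX'A ha⟩
      exact hAeq ▸ this
    · exact Finset.Subset.antisymm hsubY (hY'Y''.trans hY''Yb)
end
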